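/- Let a_{ij}, a_{ji} ∈ ℝ satisfy a_{ij} + a_{ji} ≥ 0 and max{a_{ij}, 0, a_{ji}} > 0, and set d_{ij} = -max{a_{ij}, 0, a_{ji}} (so d_{ij} < 0). Then -d_{ij} ≥ |a_{ij}|, and for all real u_i, u_j the bar state ū_{ij} defined by 2d_{ij} ū_{ij} = d_{ij}(u_i + u_j) + a_{ij}(u_j - u_i) is a convex combination of u_i and u_j; in particular min{u_i, u_j} ≤ ū_{ij} ≤ max{u_i, u_j}. -/

import Mathlib

/-- The bar state of the monolithic convex limiter is a convex combination of
`u_i` and `u_j`. -/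
theorem bar_state_convex_combination
    (aij aji : ℝ) (h1 : 0 ≤ aij + aji) (h2 : 0 < max aij (max 0 aji))
    (dij : ℝ) (hd : dij = -(max aij (max 0 aji))) (ui uj : ℝ) :
    dij < 0 ∧
    |aij| ≤ -dij ∧
    (∃ θ : ℝ, 0 ≤ θ ∧ θ ≤ 1 ∧
      (dij * (ui + uj) + aij * (uj - ui)) / (2 * dij) = θ * ui + (1 - θ) * uj) ∧
    min ui uj ≤ (dij * (ui + uj) + aij * (uj - ui)) / (2 * dij) ∧
    (dij * (ui + uj) + aij * (uj - ui)) / (2 * dij) ≤ max ui uj := by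
  have hdlt : dij < 0 := by rw [hd]; linarith
  have hmax : aij ≤ max aij (max 0 aji) := le_max_left _ _
  have hmax' : aji ≤ max aij (max 0 aji) :=
    le_trans (le_max_right 0 aji) (le_max_right _ _)
  have habs : |aij| ≤ -dij := by
    rw [hd, neg_neg, abs_le]
    exact ⟨by linarith, hmax⟩
  rw [abs_le] at habs
  have hne : (2 : ℝ) * dij ≠ 0 := by nlinarith
  have h2d : 2 * dij < 0 := by linarith
  have key : ∀ x y : ℝ, x ≤ y →
      x ≤ (dij * (x + y) + aij * (y - x)) / (2 * dij) ∧
      (dij * (x + y) + aij * (y - x)) / (2 * dij) ≤ y := fun x y h => by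
    constructor
    · rw [le_div_iff_of_neg h2d]; nlinarith
    · rw [div_le_iff_of_neg h2d]; nlinarith
  refine ⟨hdlt, by rw [abs_le]; exact habs, ?_, ?_, ?_⟩
  · refine ⟨(dij - aij) / (2 * dij), ?_, ?_, ?_⟩
    · rw [le_div_iff_of_neg h2d]; linarith
    · rw [div_le_one_of_neg h2d]; linarith
    · field_simp [hdlt.ne]; ring
  · rcases le_total ui uj with h | h
    · refine le_trans (min_le_left _ _) ?_
      rw [le_div_iff_of_neg h2d]; nlinarith
    · refine le_trans (min_le_right _ _) ?_
      rw [le_div_iff_of_neg h2d]; nlinarith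
  · rcases le_total ui uj with h | h
    · refine le_trans ?_ (le_max_right _ _)
      rw [div_le_iff_of_neg h2d]; nlinarith
    · refine le_trans ?_ (le_max_left _ _)
      rw [div_le_iff_of_neg h2d]; nlinarith
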